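/- For every l ≥ 1 and every s ≥ l + 1, there exist infinitely many odd positive integers n with k(n) = l and k'(n) = s − l; moreover they form exactly one arithmetic progression modulo 2^{s+1}. -/

import Mathlib

def collatzK (n : Nat) : Nat := padicValNat 2 (n + 1)

def collatzApex (n : Nat) : Nat := 3 ^ collatzK n * ((n + 1) / 2 ^ collatzK n) - 1

def collatzKp (n : Nat) : Nat := padicValNat 2 (collatzApex n)

def collatzKappa (n : Nat) : Nat := collatzApex n / 2 ^ collatzKp n

lemma val2_eq_iff {a t : ℕ} (ha : 0 < a) : padicValNat 2 a = t ↔ a % 2 ^ (t + 1) = 2 ^ t := by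
  haveI : Fact (Nat.Prime 2) := ⟨Nat.prime_two⟩
  constructor
  · intro h
    have h1 : 2 ^ t ∣ a := (padicValNat_dvd_iff_le ha.ne').2 (le_of_eq h.symm)
    have h2 : ¬ 2 ^ (t + 1) ∣ a := fun hd => by
      have := (padicValNat_dvd_iff_le ha.ne').1 hd; omega
    obtain ⟨b, rfl⟩ := h1
    have hb : b % 2 = 1 := by
      rcases Nat.mod_two_eq_zero_or_one b with h0 | h1
      · exfalso; apply h2
        obtain ⟨c, rfl⟩ : 2 ∣ b := Nat.dvd_of_mod_eq_zero h0
        exact ⟨c, by ring⟩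
      · exact h1
    rw [pow_succ, Nat.mul_mod_mul_left, hb, mul_one]
  · intro h
    have hd := Nat.div_add_mod a (2 ^ (t + 1))
    rw [h] at hd
    have h1 : 2 ^ t ∣ a := ⟨2 * (a / 2 ^ (t + 1)) + 1, by
      calc a = 2 ^ (t + 1) * (a / 2 ^ (t + 1)) + 2 ^ t := hd.symm
        _ = 2 ^ t * (2 * (a / 2 ^ (t + 1)) + 1) := by ring⟩
    have hge : t ≤ padicValNat 2 a := (padicValNat_dvd_iff_le ha.ne').1 h1
    have hlt : padicValNat 2 a < t + 1 := by
      by_contra hc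
      have : 2 ^ (t + 1) ∣ a := (padicValNat_dvd_iff_le ha.ne').2 (by omega)
      have := Nat.mod_eq_zero_of_dvd this
      have : 0 < 2 ^ t := Nat.pow_pos (by norm_num)
      omega
    omega

lemma exists_m0 (l t : ℕ) : ∃ m0 : ℕ, m0 < 2 ^ (t + 1) ∧
    3 ^ l * m0 ≡ 1 + 2 ^ t [MOD 2 ^ (t + 1)] := by
  haveI : NeZero (2 ^ (t + 1)) := ⟨by positivity⟩
  have hcop : Nat.Coprime (3 ^ l) (2 ^ (t + 1)) := Nat.Coprime.pow _ _ (by decide)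
  have hu : IsUnit ((3 ^ l : ℕ) : ZMod (2 ^ (t + 1))) := (ZMod.isUnit_iff_coprime _ _).2 hcop
  refine ⟨((hu.unit⁻¹ : (ZMod (2 ^ (t + 1)))ˣ) * ((1 + 2 ^ t : ℕ) : ZMod (2 ^ (t + 1)))).val,
    ZMod.val_lt _, ?_⟩
  rw [← ZMod.natCast_eq_natCast_iff, Nat.cast_mul, ZMod.natCast_val, ZMod.cast_id,
    ← mul_assoc, hu.mul_val_inv, one_mul]

/-- For every l ≥ 1 and s ≥ l + 1, there are infinitely many odd positive
integers n with k(n) = l and k'(n) = s - l, and they form exactly one residue class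
(arithmetic progression) modulo 2^(s+1). -/
theorem infinitely_many_per_class (l s : ℕ) (hl : 1 ≤ l) (hs : l + 1 ≤ s) :
    {n : ℕ | 0 < n ∧ Odd n ∧ collatzK n = l ∧ collatzKp n = s - l}.Infinite ∧
    ∃! r : ℕ, r < 2 ^ (s + 1) ∧
      ∀ n : ℕ, 0 < n → Odd n →
        ((collatzK n = l ∧ collatzKp n = s - l) ↔ n % 2 ^ (s + 1) = r) := by
  obtain ⟨t, rfl⟩ : ∃ t, s = l + t := ⟨s - l, by omega⟩
  have ht : 1 ≤ t := by omega
  have hst : l + t - l = t := by omega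
  rw [hst]
  -- basic numerics
  have h2l : (1 : ℕ) < 2 ^ l := Nat.one_lt_two_pow (by omega)
  have h2t1 : (1 : ℕ) < 2 ^ t := Nat.one_lt_two_pow (by omega)
  have h2tlt : (2 : ℕ) ^ t < 2 ^ (t + 1) := Nat.pow_lt_pow_succ (by norm_num)
  have h2tpos : (0 : ℕ) < 2 ^ t := by positivity
  have hMpos : (0 : ℕ) < 2 ^ (t + 1) := by positivity
  have h1lt : 1 + 2 ^ t < 2 ^ (t + 1) := by
    have : (2 : ℕ) ^ (t + 1) = 2 ^ t * 2 := pow_succ 2 t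
    omega
  have hMs : (2 : ℕ) ^ (l + t + 1) = 2 ^ l * 2 ^ (t + 1) := by
    rw [Nat.add_assoc, pow_add]
  have h3l : (3 : ℕ) ≤ 3 ^ l := by
    calc (3 : ℕ) = 3 ^ 1 := (pow_one 3).symm
      _ ≤ 3 ^ l := Nat.pow_le_pow_right (by norm_num) hl
  -- the witness residue
  obtain ⟨m0, hm0lt, hm0key⟩ := exists_m0 l t
  have hm0odd : m0 % 2 = 1 := by
    have h2d : (2 : ℕ) ∣ 2 ^ (t + 1) := dvd_pow_self 2 (by omega)
    have hmod2 : 3 ^ l * m0 ≡ 1 + 2 ^ t [MOD 2] := hm0key.of_dvd h2d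
    have h3odd : 3 ^ l % 2 = 1 := by
      rw [Nat.pow_mod]; norm_num
    have hmul : (3 ^ l * m0) % 2 = m0 % 2 := by
      rw [Nat.mul_mod, h3odd, one_mul, Nat.mod_mod_of_dvd _ (dvd_refl 2)]
    have h2dt : (2 : ℕ) ∣ 2 ^ t := dvd_pow_self 2 (by omega)
    unfold Nat.ModEq at hmod2
    omega
  have hm0pos : 0 < m0 := by omega
  have hn0pos : 1 ≤ 2 ^ l * m0 := Nat.one_le_iff_ne_zero.2 (by positivity)
  set n0 : ℕ := 2 ^ l * m0 - 1 with hn0def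
  have hn0succ : n0 + 1 = 2 ^ l * m0 := by omega
  have hn0lt : n0 < 2 ^ (l + t + 1) := by
    have : 2 ^ l * m0 < 2 ^ l * 2 ^ (t + 1) :=
      mul_lt_mul_of_pos_left hm0lt (by positivity)
    omega
  have hn0odd : n0 % 2 = 1 := by
    have h2d : (2 : ℕ) ∣ 2 ^ l := dvd_pow_self 2 (by omega)
    have : (2 : ℕ) ∣ 2 ^ l * m0 := h2d.mul_right m0
    omega
  -- the key characterization
  have key : ∀ n : ℕ, 0 < n → Odd n →
      ((collatzK n = l ∧ collatzKp n = t) ↔ n % 2 ^ (l + t + 1) = n0) := by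
    intro n hn hodd
    constructor
    · rintro ⟨hK, hKp⟩
      -- n + 1 = 2^l * m with m odd
      have hn1 : (n + 1) % 2 ^ (l + 1) = 2 ^ l := (val2_eq_iff (by omega)).1 hK
      have hdm := Nat.div_add_mod (n + 1) (2 ^ (l + 1))
      rw [hn1] at hdm
      set q := (n + 1) / 2 ^ (l + 1) with hqdef
      set m : ℕ := 2 * q + 1 with hmdef
      have hnm : n + 1 = 2 ^ l * m := by
        calc n + 1 = 2 ^ (l + 1) * q + 2 ^ l := hdm.symm
          _ = 2 ^ l * (2 * q + 1) := by ring
      have hdiv : (n + 1) / 2 ^ l = m := by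
        rw [hnm, Nat.mul_div_cancel_left _ (by positivity)]
      have hapex : collatzApex n = 3 ^ l * m - 1 := by
        unfold collatzApex collatzK
        unfold collatzK at hK
        rw [hK, hdiv]
      have hmpos : 1 ≤ m := by omega
      have hAge : 3 ≤ 3 ^ l * m := le_trans h3l (Nat.le_mul_of_pos_right _ (by omega))
      have hapexpos : 0 < collatzApex n := by rw [hapex]; omega
      have hKp' : collatzApex n % 2 ^ (t + 1) = 2 ^ t := (val2_eq_iff hapexpos).1 hKp
      rw [hapex] at hKp'
      -- recover 3^l * m ≡ 1 + 2^t
      have hdm2 := Nat.div_add_mod (3 ^ l * m - 1) (2 ^ (t + 1))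
      rw [hKp'] at hdm2
      have hAmod : (3 ^ l * m) % 2 ^ (t + 1) = (1 + 2 ^ t) % 2 ^ (t + 1) := by
        rw [Nat.mod_eq_of_lt h1lt]
        have hA : 3 ^ l * m = 2 ^ (t + 1) * ((3 ^ l * m - 1) / 2 ^ (t + 1)) + (1 + 2 ^ t) := by
          omega
        rw [hA, Nat.mul_add_mod, Nat.mod_eq_of_lt h1lt]
      have hmm0 : m ≡ m0 [MOD 2 ^ (t + 1)] := by
        have h1 : 3 ^ l * m ≡ 3 ^ l * m0 [MOD 2 ^ (t + 1)] :=
          Nat.ModEq.trans hAmod hm0key.symm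
        exact Nat.ModEq.cancel_left_of_coprime (Nat.Coprime.pow _ _ (by decide)) h1
      have h2 : n + 1 ≡ n0 + 1 [MOD 2 ^ (l + t + 1)] := by
        rw [hnm, hn0succ, hMs]
        exact hmm0.mul_left' (c := 2 ^ l)
      have h3 : n ≡ n0 [MOD 2 ^ (l + t + 1)] := h2.add_right_cancel' 1
      rw [Nat.ModEq] at h3
      rw [h3, Nat.mod_eq_of_lt hn0lt]
    · intro hmod
      have hdm := Nat.div_add_mod n (2 ^ (l + t + 1))
      rw [hmod] at hdm
      set j := n / 2 ^ (l + t + 1) with hjdef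
      set m : ℕ := 2 ^ (t + 1) * j + m0 with hmdef
      have hnm : n + 1 = 2 ^ l * m := by
        calc n + 1 = 2 ^ (l + t + 1) * j + (n0 + 1) := by omega
          _ = 2 ^ l * 2 ^ (t + 1) * j + 2 ^ l * m0 := by rw [hMs, hn0succ]
          _ = 2 ^ l * (2 ^ (t + 1) * j + m0) := by ring
      have hmodd : m % 2 = 1 := by
        have : 2 ^ (t + 1) * j = 2 * (2 ^ t * j) := by ring
        omega
      have hK : collatzK n = l := by
        unfold collatzK
        rw [val2_eq_iff (by omega), hnm, pow_succ, Nat.mul_mod_mul_left, hmodd, mul_one]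
      have hdiv : (n + 1) / 2 ^ l = m := by
        rw [hnm, Nat.mul_div_cancel_left _ (by positivity)]
      have hapex : collatzApex n = 3 ^ l * m - 1 := by
        unfold collatzApex collatzK
        unfold collatzK at hK
        rw [hK, hdiv]
      have hmm0 : m ≡ m0 [MOD 2 ^ (t + 1)] := by
        rw [hmdef]; exact (Nat.mul_add_mod _ _ _)
      have hAmod : (3 ^ l * m) % 2 ^ (t + 1) = 1 + 2 ^ t := by
        have h1 : 3 ^ l * m ≡ 1 + 2 ^ t [MOD 2 ^ (t + 1)] :=
          (hmm0.mul_left (3 ^ l)).trans hm0key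
        rw [Nat.ModEq] at h1
        rw [h1, Nat.mod_eq_of_lt h1lt]
      have hdm2 := Nat.div_add_mod (3 ^ l * m) (2 ^ (t + 1))
      rw [hAmod] at hdm2
      have hmpos : 1 ≤ m := by omega
      have hAge : 3 ≤ 3 ^ l * m := le_trans h3l (Nat.le_mul_of_pos_right _ (by omega))
      have hKp : collatzKp n = t := by
        unfold collatzKp
        rw [hapex]
        rw [val2_eq_iff (by omega)]
        have hA : 3 ^ l * m - 1 = 2 ^ (t + 1) * ((3 ^ l * m) / 2 ^ (t + 1)) + 2 ^ t := by
          omega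
        rw [hA, Nat.mul_add_mod, Nat.mod_eq_of_lt h2tlt]
      exact ⟨hK, hKp⟩
  constructor
  · apply Set.infinite_of_injective_forall_mem
      (f := fun j : ℕ => 2 ^ (l + t + 1) * j + n0)
    · intro a b hab
      simp only at hab
      exact Nat.eq_of_mul_eq_mul_left (by positivity : 0 < 2 ^ (l + t + 1)) (by omega)
    · intro j
      have hmem0 : (2 ^ (l + t + 1) * j + n0) % 2 ^ (l + t + 1) = n0 := by
        rw [Nat.mul_add_mod, Nat.mod_eq_of_lt hn0lt]
      have hpos : 0 < 2 ^ (l + t + 1) * j + n0 := by omega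
      have hodd : Odd (2 ^ (l + t + 1) * j + n0) := by
        rw [Nat.odd_iff]
        have : 2 ^ (l + t + 1) * j = 2 * (2 ^ (l + t) * j) := by ring
        omega
      exact ⟨hpos, hodd, (key _ hpos hodd).2 hmem0⟩
  · refine ⟨n0, ⟨hn0lt, key⟩, ?_⟩
    intro r' ⟨hr'lt, hr'⟩
    have hn0mem : collatzK n0 = l ∧ collatzKp n0 = t :=
      (key n0 (by omega) (Nat.odd_iff.2 hn0odd)).2 (Nat.mod_eq_of_lt hn0lt)
    have := (hr' n0 (by omega) (Nat.odd_iff.2 hn0odd)).1 hn0mem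
    rw [Nat.mod_eq_of_lt hn0lt] at this
    omega
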